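/- Every generator in the category of right R-modules is completely faithful, i.e., if U is a generator of Mod-R, then for every left R-module M and every nonzero m ∈ M there exists u ∈ U with u ⊗ m ≠ 0 in U ⊗_R M. -/
import Mathlib


open TensorProduct

universe u

/-- **Every generator of `Mod-R` is completely faithful.**
If `U` is a generator of the category of `R`-modules (every module is a quotient of a
direct sum of copies of `U`), then for every `R`-module `M` and every nonzero `m ∈ M`
there exists `u ∈ U` with `u ⊗ m ≠ 0` in `U ⊗[R] M`. -/
theorem generator_completely_faithful
    {R : Type u} [CommRing R] (U : Type u) [AddCommGroup U] [Module R U]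
    (hU : ∀ (M : Type u) [AddCommGroup M] [Module R M],
      ∃ (ι : Type u) (p : (ι →₀ U) →ₗ[R] M), Function.Surjective p)
    (M : Type u) [AddCommGroup M] [Module R M] (m : M) (hm : m ≠ 0) :
    ∃ u : U, u ⊗ₜ[R] m ≠ 0 := by
  by_contra h
  push_neg at h
  obtain ⟨ι, p, hp⟩ := hU R
  obtain ⟨f, hf⟩ := hp 1
  -- for each i, the map U ⊗ M → M, u ⊗ m' ↦ p (single i u) • m'
  have key : ∀ i : ι, ∀ u : U, p (Finsupp.single i u) • m = 0 := by
    intro i u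
    have : p (Finsupp.single i u) • m =
        (TensorProduct.lift ((LinearMap.lsmul R M).comp
          (p.comp (Finsupp.lsingle i)))) (u ⊗ₜ[R] m) := by
      simp
    rw [this, h u, map_zero]
  have hm0 : m = 0 := by
    have : m = (p f) • m := by rw [hf, one_smul]
    rw [this]
    conv_lhs => rw [← Finsupp.sum_single f]
    rw [map_finsuppSum, Finsupp.sum, Finset.sum_smul]
    exact Finset.sum_eq_zero fun i _ => key i (f i)
  exact hm hm0
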